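/- If ν is strictly dominant and g ∈ U_1 satisfies ε^ν·σ(g)·ε^{−ν} = g, then g is the identity matrix. -/

import Mathlib

noncomputable section

open Matrix

/-- The ε-adic valuation on `L = k̄((ε))`, with `val 0 = ∞`. -/
def val {K : Type*} [Field K] (x : LaurentSeries K) : WithTop ℤ := x.orderTop

/-- The uniformizer ε of the Laurent series field. -/
def eps (K : Type*) [Field K] : LaurentSeries K := HahnSeries.single 1 1

/-- `σ : L → L` is the Frobenius automorphism: it fixes ε and raises each Laurent-series
coefficient to the `q`-th power.  (This property determines `σ` uniquely.) -/
def IsFrobenius (K : Type*) [Field K] (q : ℕ)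
    (σ : LaurentSeries K → LaurentSeries K) : Prop :=
  ∀ (x : LaurentSeries K) (n : ℤ), (σ x).coeff n = (x.coeff n) ^ q

/-- Upper unitriangular matrix: an element of `U_1`. -/
def Unitri {K : Type*} [Field K] {n : ℕ}
    (g : Matrix (Fin n) (Fin n) (LaurentSeries K)) : Prop :=
  (∀ i, g i i = 1) ∧ (∀ i j : Fin n, j < i → g i j = 0)

/-- `ν = (ν_1, …, ν_n)` is strictly dominant: `ν_1 > ν_2 > … > ν_n`. -/
def StrictDominant {n : ℕ} (ν : Fin n → ℤ) : Prop :=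
  ∀ p q : Fin n, p < q → ν q < ν p

/-- The diagonal matrix `ε^ν = diag(ε^{ν_1}, …, ε^{ν_n})`. -/
def epsDiag (K : Type*) [Field K] {n : ℕ} (ν : Fin n → ℤ) :
    Matrix (Fin n) (Fin n) (LaurentSeries K) :=
  Matrix.diagonal fun i => eps K ^ (ν i)

/-- The map `f_ν : U_1 → U_1`, `f_ν(h) = h⁻¹ · ε^ν · σ(h) · ε^{−ν}`. -/
def fnu {K : Type*} [Field K] {n : ℕ} (σ : LaurentSeries K → LaurentSeries K)
    (ν : Fin n → ℤ) (g : Matrix (Fin n) (Fin n) (LaurentSeries K)) :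
    Matrix (Fin n) (Fin n) (LaurentSeries K) :=
  g⁻¹ * epsDiag K ν * g.map σ * epsDiag K (fun i => -ν i)

/-- The subgroup `U(o_L)` of `U_1`: unitriangular matrices with entries in `o_L`. -/
def UO (K : Type*) [Field K] (n : ℕ) :
    Set (Matrix (Fin n) (Fin n) (LaurentSeries K)) :=
  {g | Unitri g ∧ ∀ p q : Fin n, 0 ≤ val (g p q)}

/-- `U_N = {g ∈ U_1 : val(g_{pq}) ≥ (q−p)·N for all p < q}`
(equivalently `ε^{−μ}·U(o_L)·ε^{μ}` for `μ = (N, 2N, …, nN)`). -/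
def UN (K : Type*) [Field K] (n : ℕ) (N : ℤ) :
    Set (Matrix (Fin n) (Fin n) (LaurentSeries K)) :=
  {g | Unitri g ∧ ∀ p q : Fin n, p < q →
    ((((q : ℤ) - (p : ℤ)) * N : ℤ) : WithTop ℤ) ≤ val (g p q)}

/-- `U_{m,N} = {g ∈ U_1 : val(g_{pq}) ≥ (q−p)·N + m for all p < q}`. -/
def UmN (K : Type*) [Field K] (n : ℕ) (m N : ℤ) :
    Set (Matrix (Fin n) (Fin n) (LaurentSeries K)) :=
  {g | Unitri g ∧ ∀ p q : Fin n, p < q →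
    ((((q : ℤ) - (p : ℤ)) * N + m : ℤ) : WithTop ℤ) ≤ val (g p q)}


private lemma key_aux {K : Type*} [Field K] {q : ℕ} (hq : q ≠ 0)
    {σ : LaurentSeries K → LaurentSeries K}
    (hσ : IsFrobenius K q σ)
    {d : ℤ} (hd : 0 < d) {x : LaurentSeries K}
    (hx : x = eps K ^ d * σ x) : x = 0 := by
  by_contra h0
  obtain ⟨m, hm⟩ : ∃ m, x.coeff m ≠ 0 ∧ m = x.order :=
    ⟨x.order, HahnSeries.coeff_order_eq_zero.not.2 h0, rfl⟩
  have hed : eps K ^ d = HahnSeries.single d (1 : K) := by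
    have : d = (d.toNat : ℤ) := (Int.toNat_of_nonneg hd.le).symm
    rw [this, zpow_natCast, eps, HahnSeries.single_pow]
    simp
  have hc : x.coeff m = (σ x).coeff (m - d) := by
    conv_lhs => rw [hx, hed]
    have := HahnSeries.coeff_single_mul_add (r := (1:K)) (x := σ x) (b := d)
      (a := m - d)
    rw [show m - d + d = m by ring] at this
    rw [this, one_mul]
  rw [hσ] at hc
  have : x.coeff (m - d) = 0 :=
    HahnSeries.coeff_eq_zero_of_lt_order (by omega)
  rw [this, zero_pow hq] at hc
  exact hm.1 hc

/-- if `ν` is strictly dominant and `g ∈ U_1` satisfies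
`ε^ν·σ(g)·ε^{−ν} = g`, then `g` is the identity matrix. -/
theorem fixed_point_of_twisted_conjugation (F : Type*) [Field F] [Fintype F]
    (n : ℕ) (hn : 2 ≤ n)
    (σ : LaurentSeries (AlgebraicClosure F) → LaurentSeries (AlgebraicClosure F))
    (hσ : IsFrobenius (AlgebraicClosure F) (Fintype.card F) σ)
    (ν : Fin n → ℤ) (hν : StrictDominant ν)
    (g : Matrix (Fin n) (Fin n) (LaurentSeries (AlgebraicClosure F)))
    (hg : Unitri g)
    (h : epsDiag (AlgebraicClosure F) ν * g.map σ * epsDiag (AlgebraicClosure F) (fun i => -ν i) = g) :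
    g = 1 := by
  have hq : Fintype.card F ≠ 0 := Fintype.card_ne_zero
  have heps : eps (AlgebraicClosure F) ≠ 0 :=
    HahnSeries.single_ne_zero one_ne_zero
  refine Matrix.ext fun i j => ?_
  rcases lt_trichotomy i j with hij | hij | hij
  · rw [Matrix.one_apply_ne hij.ne]
    have he := congrFun (congrFun h i) j
    simp only [epsDiag, Matrix.diagonal_mul, Matrix.mul_diagonal,
      Matrix.map_apply] at he
    rw [mul_right_comm, ← zpow_add₀ heps, ← sub_eq_add_neg] at he
    exact key_aux hq hσ (sub_pos.mpr (hν i j hij)) he.symm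
  · subst hij
    rw [hg.1 i, Matrix.one_apply_eq]
  · rw [hg.2 i j hij]
    exact (Matrix.one_apply_ne hij.ne').symm
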